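/- Let R be a DGA over A, C_• a free graded A-module with finite basis B (degrees ≥ 0), (m_{x,y}) a twisting cocycle for (R, C_•), and F, F′ DG right R-modules. Let Γ : F → F′ be a morphism of DG right R-modules, i.e. a degree-0 A-linear map with Γ∘∂ = ∂∘Γ and Γ(α·a) = Γ(α)·a for all α ∈ F, a ∈ R. Then Γ̃(α⊗x) := Γ(α)⊗x defines a chain map Γ̃ : C_*(C_•, F) → C_*(C_•, F′) between the twisted complexes. If moreover R_i = 0, F_i = 0 and F′_i = 0 for all i < 0 and Γ is a quasi-isomorphism, then Γ̃ is a quasi-isomorphism. -/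

import Mathlib

/-- A chain map `f` between two `ℤ`-graded complexes (graded pieces `Mdeg`, `Ndeg`,
differentials `dM`, `dN` of degree `-1`) is a quasi-isomorphism: it induces an isomorphism
on homology in every degree (stated concretely: surjectivity and injectivity of the induced
map on homology). -/
def GradedQuasiIso {M N : Type*} [AddCommGroup M] [AddCommGroup N]
    (Mdeg : ℤ → Set M) (Ndeg : ℤ → Set N)
    (dM : M → M) (dN : N → N) (f : M → N) : Prop :=
  ∀ n : ℤ,
    (∀ y ∈ Ndeg n, dN y = 0 →
      ∃ x ∈ Mdeg n, dM x = 0 ∧ ∃ z ∈ Ndeg (n + 1), f x - y = dN z) ∧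
    (∀ x ∈ Mdeg n, dM x = 0 → (∃ w ∈ Ndeg (n + 1), f x = dN w) →
      ∃ v ∈ Mdeg (n + 1), x = dM v)

/-- A morphism `Γ : F → F'` of DG right `R`-modules induces a chain map
`Γ̃ (α ⊗ x) = Γ(α) ⊗ x` between the twisted complexes; if `R`, `F`, `F'` vanish in negative
degrees and `Γ` is a quasi-isomorphism, then `Γ̃` is a quasi-isomorphism. -/
theorem statement7
    {A : Type*} [CommRing A] {R : Type*} [Ring R] [Algebra A R]
    (ℛ : ℤ → Submodule A R) [GradedRing ℛ]
    (d : R →ₗ[A] R)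
    (hd_mem : ∀ i : ℤ, ∀ a ∈ ℛ i, d a ∈ ℛ (i - 1))
    (hd_sq : ∀ a : R, d (d a) = 0)
    (hd_leibniz : ∀ i : ℤ, ∀ a ∈ ℛ i, ∀ b : R,
      d (a * b) = d a * b + (Int.negOnePow i : ℤ) • (a * d b))
    {B : Type*} [Fintype B] [DecidableEq B]
    (deg : B → ℤ) (hdeg : ∀ x : B, 0 ≤ deg x)
    (m : B → B → R)
    (hm_mem : ∀ x y : B, m x y ∈ ℛ (deg x - deg y - 1))
    (hm_zero : ∀ x y : B, ¬ deg y < deg x → m x y = 0)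
    (hm_mc : ∀ x y : B, d (m x y) =
      ∑ z : B, (Int.negOnePow (deg x - deg z) : ℤ) • (m x z * m z y))
    {F : Type*} [AddCommGroup F] [Module A F]
    (ℱ : ℤ → Submodule A F) [DirectSum.Decomposition ℱ]
    (dF : F →ₗ[A] F)
    (hdF_mem : ∀ i : ℤ, ∀ f ∈ ℱ i, dF f ∈ ℱ (i - 1))
    (hdF_sq : ∀ f : F, dF (dF f) = 0)
    (act : F →ₗ[A] R →ₗ[A] F)
    (hact_one : ∀ f : F, act f 1 = f)
    (hact_mul : ∀ (f : F) (a b : R), act (act f a) b = act f (a * b))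
    (hact_mem : ∀ (i j : ℤ), ∀ f ∈ ℱ i, ∀ a ∈ ℛ j, act f a ∈ ℱ (i + j))
    (hact_leibniz : ∀ i : ℤ, ∀ f ∈ ℱ i, ∀ a : R,
      dF (act f a) = act (dF f) a + (Int.negOnePow i : ℤ) • act f (d a))
    {F' : Type*} [AddCommGroup F'] [Module A F']
    (ℱ' : ℤ → Submodule A F') [DirectSum.Decomposition ℱ']
    (dF' : F' →ₗ[A] F')
    (hdF'_mem : ∀ i : ℤ, ∀ f ∈ ℱ' i, dF' f ∈ ℱ' (i - 1))
    (hdF'_sq : ∀ f : F', dF' (dF' f) = 0)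
    (act' : F' →ₗ[A] R →ₗ[A] F')
    (hact'_one : ∀ f : F', act' f 1 = f)
    (hact'_mul : ∀ (f : F') (a b : R), act' (act' f a) b = act' f (a * b))
    (hact'_mem : ∀ (i j : ℤ), ∀ f ∈ ℱ' i, ∀ a ∈ ℛ j, act' f a ∈ ℱ' (i + j))
    (hact'_leibniz : ∀ i : ℤ, ∀ f ∈ ℱ' i, ∀ a : R,
      dF' (act' f a) = act' (dF' f) a + (Int.negOnePow i : ℤ) • act' f (d a))
    (Γ : F →ₗ[A] F')
    (hΓ_deg : ∀ i : ℤ, ∀ f ∈ ℱ i, Γ f ∈ ℱ' i)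
    (hΓ_d : ∀ f : F, Γ (dF f) = dF' (Γ f))
    (hΓ_act : ∀ (f : F) (a : R), Γ (act f a) = act' (Γ f) a)
    (D : (B → F) →ₗ[A] (B → F))
    (hD : ∀ i : ℤ, ∀ f ∈ ℱ i, ∀ x : B,
      D (Pi.single x f) = Pi.single x (dF f) +
        (Int.negOnePow i : ℤ) • (fun y : B => act f (m x y)))
    (D' : (B → F') →ₗ[A] (B → F'))
    (hD' : ∀ i : ℤ, ∀ f ∈ ℱ' i, ∀ x : B,
      D' (Pi.single x f) = Pi.single x (dF' f) +
        (Int.negOnePow i : ℤ) • (fun y : B => act' f (m x y)))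
    (Γt : (B → F) →ₗ[A] (B → F'))
    (hΓt : ∀ (c : B → F) (x : B), Γt c x = Γ (c x)) :
    (D' ∘ₗ Γt = Γt ∘ₗ D) ∧
      ((∀ i : ℤ, i < 0 → ℛ i = ⊥) → (∀ i : ℤ, i < 0 → ℱ i = ⊥) →
        (∀ i : ℤ, i < 0 → ℱ' i = ⊥) →
        GradedQuasiIso (fun n => (ℱ n : Set F)) (fun n => (ℱ' n : Set F'))
          (⇑dF) (⇑dF') (⇑Γ) →
        GradedQuasiIso (fun n => {c : B → F | ∀ x : B, c x ∈ ℱ (n - deg x)})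
          (fun n => {c : B → F' | ∀ x : B, c x ∈ ℱ' (n - deg x)})
          (⇑D) (⇑D') (⇑Γt)) := by
  classical
  -- Γt on a single
  have hΓt_single : ∀ (f : F) (x : B), Γt (Pi.single x f) = Pi.single x (Γ f) := by
    intro f x
    funext y
    rw [hΓt]
    rcases eq_or_ne y x with rfl | h
    · simp
    · simp [Pi.single_eq_of_ne h]
  have hΓt_fun : ∀ g : B → F, Γt g = fun y => Γ (g y) := fun g => funext (hΓt g)
  -- Part 1 on homogeneous singles
  have key1 : ∀ f : F, ∀ x : B, Γt (D (Pi.single x f)) = D' (Γt (Pi.single x f)) := by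
    intro f
    induction f using DirectSum.Decomposition.inductionOn ℱ with
    | zero => intro x; simp
    | @homogeneous i mm =>
        intro x
        rw [hD i mm mm.2 x, hΓt_single, hD' i (Γ mm) (hΓ_deg i mm mm.2) x,
          map_add, map_zsmul, hΓt_single, hΓ_d, hΓt_fun]
        congr 1
        funext y
        simp only [Pi.smul_apply, hΓ_act]
    | add a b ha hb =>
        intro x
        have : (Pi.single x (a + b) : B → F) = Pi.single x a + Pi.single x b := by
          simp [Pi.single_add]
        rw [this, map_add, map_add, map_add, map_add, ha, hb]
  have part1 : D' ∘ₗ Γt = Γt ∘ₗ D := by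
    apply LinearMap.ext
    intro c
    have hc : c = ∑ x, Pi.single x (c x) := by
      funext y; rw [Finset.sum_apply]; exact (Fintype.sum_pi_single y c).symm
    simp only [LinearMap.comp_apply]
    rw [hc, map_sum, map_sum, map_sum, map_sum]
    exact (Finset.sum_congr rfl fun x _ => (key1 (c x) x).symm)
  -- sign lemmas
  have hεadd : ∀ a b : ℤ, ((Int.negOnePow a : ℤ)) * (Int.negOnePow b : ℤ)
      = (Int.negOnePow (a + b) : ℤ) := by
    intro a b
    rw [Int.negOnePow_add]
    push_cast
    ring
  have hεflip : ∀ s : ℤ, (Int.negOnePow (s - 1) : ℤ) = -(Int.negOnePow s : ℤ) := by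
    intro s
    have := Int.negOnePow_succ (s - 1)
    rw [sub_add_cancel] at this
    rw [this]
    push_cast
    ring
  have hcoeff : ∀ i t : ℤ, (Int.negOnePow i : ℤ) * ((Int.negOnePow i : ℤ) * (Int.negOnePow t : ℤ))
      + (Int.negOnePow i : ℤ) * (Int.negOnePow (i + (t - 1)) : ℤ) = 0 := by
    intro i t
    rw [hεadd, hεadd, hεadd]
    have h1 : i + (i + (t - 1)) = (i + (i + t)) - 1 := by ring
    rw [h1, hεflip]
    ring
  -- D squares to zero on homogeneous singles
  have hDDs : ∀ (i : ℤ) (f : F), f ∈ ℱ i → ∀ x : B, D (D (Pi.single x f)) = 0 := by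
    intro i f hf x
    rw [hD i f hf x, map_add, map_zsmul, hD (i-1) (dF f) (hdF_mem i f hf) x, hdF_sq]
    have hexp : (fun y => act f (m x y)) = ∑ y : B, Pi.single y (act f (m x y)) := by
      funext w
      rw [Finset.sum_apply]
      exact (Fintype.sum_pi_single w (fun y => act f (m x y))).symm
    rw [hexp, map_sum]
    have hterm : ∀ y : B, D (Pi.single y (act f (m x y))) =
        Pi.single y (dF (act f (m x y)))
          + (Int.negOnePow (i + (deg x - deg y - 1)) : ℤ) • fun w => act (act f (m x y)) (m y w) :=
      fun y => hD _ _ (hact_mem i _ f hf _ (hm_mem x y)) y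
    rw [Finset.sum_congr rfl (fun y _ => hterm y)]
    funext w
    simp only [Pi.add_apply, Pi.smul_apply, Finset.sum_apply, Pi.zero_apply,
      Pi.single_zero, Finset.sum_add_distrib, Fintype.sum_pi_single, smul_add]
    rw [hact_leibniz i f hf (m x w), hm_mc x w, map_sum]
    simp only [map_zsmul, hact_mul, smul_add, Finset.smul_sum, smul_smul]
    rw [hεflip i]
    have habel : ∀ (v s1 s2 : F), s1 + s2 = 0 →
        0 + -(Int.negOnePow i : ℤ) • v + ((Int.negOnePow i : ℤ) • v + s1 + s2) = 0 := by
      intro v s1 s2 h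
      rw [add_assoc ((Int.negOnePow i : ℤ) • v), h]
      simp [neg_smul]
    refine habel _ _ _ ?_
    rw [← Finset.sum_add_distrib]
    refine Finset.sum_eq_zero fun y _ => ?_
    rw [← add_smul, hcoeff i (deg x - deg y)]
    simp
  -- D squared is zero
  have hDD : ∀ c : B → F, D (D c) = 0 := by
    have hsingle : ∀ f : F, ∀ x : B, D (D (Pi.single x f)) = 0 := by
      intro f
      induction f using DirectSum.Decomposition.inductionOn ℱ with
      | zero => intro x; simp
      | @homogeneous i mm => exact hDDs i mm mm.2
      | add a b ha hb =>
          intro x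
          have : (Pi.single x (a + b) : B → F) = Pi.single x a + Pi.single x b := by
            simp [Pi.single_add]
          rw [this, map_add, map_add, ha, hb, add_zero]
    intro c
    have hc : c = ∑ x, Pi.single x (c x) := by
      funext y; rw [Finset.sum_apply]; exact (Fintype.sum_pi_single y c).symm
    rw [hc, map_sum, map_sum]
    exact Finset.sum_eq_zero fun x _ => hsingle (c x) x
  -- D' squares to zero on homogeneous singles
  have hDDs' : ∀ (i : ℤ) (f : F'), f ∈ ℱ' i → ∀ x : B, D' (D' (Pi.single x f)) = 0 := by
    intro i f hf x
    rw [hD' i f hf x, map_add, map_zsmul, hD' (i-1) (dF' f) (hdF'_mem i f hf) x, hdF'_sq]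
    have hexp : (fun y => act' f (m x y)) = ∑ y : B, Pi.single y (act' f (m x y)) := by
      funext w
      rw [Finset.sum_apply]
      exact (Fintype.sum_pi_single w (fun y => act' f (m x y))).symm
    rw [hexp, map_sum]
    have hterm : ∀ y : B, D' (Pi.single y (act' f (m x y))) =
        Pi.single y (dF' (act' f (m x y)))
          + (Int.negOnePow (i + (deg x - deg y - 1)) : ℤ) • fun w => act' (act' f (m x y)) (m y w) :=
      fun y => hD' _ _ (hact'_mem i _ f hf _ (hm_mem x y)) y
    rw [Finset.sum_congr rfl (fun y _ => hterm y)]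
    funext w
    simp only [Pi.add_apply, Pi.smul_apply, Finset.sum_apply, Pi.zero_apply,
      Pi.single_zero, Finset.sum_add_distrib, Fintype.sum_pi_single, smul_add]
    rw [hact'_leibniz i f hf (m x w), hm_mc x w, map_sum]
    simp only [map_zsmul, hact'_mul, smul_add, Finset.smul_sum, smul_smul]
    rw [hεflip i]
    have habel : ∀ (v s1 s2 : F'), s1 + s2 = 0 →
        0 + -(Int.negOnePow i : ℤ) • v + ((Int.negOnePow i : ℤ) • v + s1 + s2) = 0 := by
      intro v s1 s2 h
      rw [add_assoc ((Int.negOnePow i : ℤ) • v), h]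
      simp [neg_smul]
    refine habel _ _ _ ?_
    rw [← Finset.sum_add_distrib]
    refine Finset.sum_eq_zero fun y _ => ?_
    rw [← add_smul, hcoeff i (deg x - deg y)]
    simp
  have hDD' : ∀ c : B → F', D' (D' c) = 0 := by
    have hsingle : ∀ f : F', ∀ x : B, D' (D' (Pi.single x f)) = 0 := by
      intro f
      induction f using DirectSum.Decomposition.inductionOn ℱ' with
      | zero => intro x; simp
      | @homogeneous i mm => exact hDDs' i mm mm.2
      | add a b ha hb =>
          intro x
          have : (Pi.single x (a + b) : B → F') = Pi.single x a + Pi.single x b := by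
            simp [Pi.single_add]
          rw [this, map_add, map_add, ha, hb, add_zero]
    intro c
    have hc : c = ∑ x, Pi.single x (c x) := by
      funext y; rw [Finset.sum_apply]; exact (Fintype.sum_pi_single y c).symm
    rw [hc, map_sum, map_sum]
    exact Finset.sum_eq_zero fun x _ => hsingle (c x) x
  -- index transport helpers
  have hcastF : ∀ (i j : ℤ) (v : F), i = j → v ∈ ℱ i → v ∈ ℱ j := by
    rintro i j v rfl hv; exact hv
  have hcastF' : ∀ (i j : ℤ) (v : F'), i = j → v ∈ ℱ' i → v ∈ ℱ' j := by
    rintro i j v rfl hv; exact hv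
  -- componentwise formula for D
  have hDapply : ∀ (n : ℤ) (c : B → F), (∀ x, c x ∈ ℱ (n - deg x)) → ∀ y : B,
      D c y = dF (c y) + ∑ x : B, (Int.negOnePow (n - deg x) : ℤ) • act (c x) (m x y) := by
    intro n c hc y
    have hc' : c = ∑ x, Pi.single x (c x) := by
      funext w; rw [Finset.sum_apply]; exact (Fintype.sum_pi_single w c).symm
    conv_lhs => rw [hc', map_sum]
    rw [Finset.sum_apply]
    have hterm : ∀ x : B, D (Pi.single x (c x)) y =
        (Pi.single x (dF (c x)) : B → F) y + (Int.negOnePow (n - deg x) : ℤ) • act (c x) (m x y) := by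
      intro x
      rw [hD (n - deg x) (c x) (hc x) x]
      simp
    rw [Finset.sum_congr rfl fun x _ => hterm x, Finset.sum_add_distrib,
      Fintype.sum_pi_single]
  have hD'apply : ∀ (n : ℤ) (c : B → F'), (∀ x, c x ∈ ℱ' (n - deg x)) → ∀ y : B,
      D' c y = dF' (c y) + ∑ x : B, (Int.negOnePow (n - deg x) : ℤ) • act' (c x) (m x y) := by
    intro n c hc y
    have hc' : c = ∑ x, Pi.single x (c x) := by
      funext w; rw [Finset.sum_apply]; exact (Fintype.sum_pi_single w c).symm
    conv_lhs => rw [hc', map_sum]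
    rw [Finset.sum_apply]
    have hterm : ∀ x : B, D' (Pi.single x (c x)) y =
        (Pi.single x (dF' (c x)) : B → F') y + (Int.negOnePow (n - deg x) : ℤ) • act' (c x) (m x y) := by
      intro x
      rw [hD' (n - deg x) (c x) (hc x) x]
      simp
    rw [Finset.sum_congr rfl fun x _ => hterm x, Finset.sum_add_distrib,
      Fintype.sum_pi_single]
  -- on the top filtration layer, D is just dF
  have hDtop : ∀ (n q : ℤ) (c : B → F), (∀ x, c x ∈ ℱ (n - deg x)) →
      (∀ x, q < deg x → c x = 0) → ∀ y, q ≤ deg y → D c y = dF (c y) := by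
    intro n q c hc hs y hy
    rw [hDapply n c hc y, Finset.sum_eq_zero, add_zero]
    intro x _
    by_cases hxy : deg y < deg x
    · rw [hs x (lt_of_le_of_lt hy hxy)]; simp
    · rw [hm_zero x y hxy]; simp
  have hD'top : ∀ (n q : ℤ) (c : B → F'), (∀ x, c x ∈ ℱ' (n - deg x)) →
      (∀ x, q < deg x → c x = 0) → ∀ y, q ≤ deg y → D' c y = dF' (c y) := by
    intro n q c hc hs y hy
    rw [hD'apply n c hc y, Finset.sum_eq_zero, add_zero]
    intro x _
    by_cases hxy : deg y < deg x
    · rw [hs x (lt_of_le_of_lt hy hxy)]; simp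
    · rw [hm_zero x y hxy]; simp
  -- D preserves the filtration support
  have hDsupp : ∀ (n q : ℤ) (c : B → F), (∀ x, c x ∈ ℱ (n - deg x)) →
      (∀ x, q ≤ deg x → c x = 0) → ∀ y, q ≤ deg y → D c y = 0 := by
    intro n q c hc hs y hy
    rw [hDtop n q c hc (fun x hx => hs x hx.le) y hy, hs y hy, map_zero]
  have hD'supp : ∀ (n q : ℤ) (c : B → F'), (∀ x, c x ∈ ℱ' (n - deg x)) →
      (∀ x, q ≤ deg x → c x = 0) → ∀ y, q ≤ deg y → D' c y = 0 := by
    intro n q c hc hs y hy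
    rw [hD'top n q c hc (fun x hx => hs x hx.le) y hy, hs y hy, map_zero]
  -- D decreases degree by one
  have hDmem : ∀ (n : ℤ) (c : B → F), (∀ x, c x ∈ ℱ (n + 1 - deg x)) →
      ∀ y, D c y ∈ ℱ (n - deg y) := by
    intro n c hc y
    rw [hDapply (n+1) c hc y]
    refine Submodule.add_mem _ ?_ (Submodule.sum_mem _ fun x _ => ?_)
    · exact hcastF _ _ _ (by ring) (hdF_mem _ _ (hc y))
    · exact zsmul_mem (hcastF _ _ _ (by ring)
        (hact_mem _ _ _ (hc x) _ (hm_mem x y))) _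
  have hD'mem : ∀ (n : ℤ) (c : B → F'), (∀ x, c x ∈ ℱ' (n + 1 - deg x)) →
      ∀ y, D' c y ∈ ℱ' (n - deg y) := by
    intro n c hc y
    rw [hD'apply (n+1) c hc y]
    refine Submodule.add_mem _ ?_ (Submodule.sum_mem _ fun x _ => ?_)
    · exact hcastF' _ _ _ (by ring) (hdF'_mem _ _ (hc y))
    · exact zsmul_mem (hcastF' _ _ _ (by ring)
        (hact'_mem _ _ _ (hc x) _ (hm_mem x y))) _
  have hΓtmem : ∀ (n : ℤ) (c : B → F), (∀ x, c x ∈ ℱ (n - deg x)) →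
      ∀ y, Γt c y ∈ ℱ' (n - deg y) := by
    intro n c hc y
    rw [hΓt]
    exact hΓ_deg _ _ (hc y)
  have hpart1' : ∀ c : B → F, D' (Γt c) = Γt (D c) := fun c => LinearMap.congr_fun part1 c
  refine ⟨part1, ?_⟩
  intro _ _ _ hqis
  -- the filtration induction
  have key : ∀ p : ℕ, ∀ n : ℤ,
      (∀ c' : B → F', (∀ x, c' x ∈ ℱ' (n - deg x)) → (∀ x, (p:ℤ) ≤ deg x → c' x = 0) →
        D' c' = 0 →
        ∃ c : B → F, (∀ x, c x ∈ ℱ (n - deg x)) ∧ (∀ x, (p:ℤ) ≤ deg x → c x = 0) ∧ D c = 0 ∧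
          ∃ z : B → F', (∀ x, z x ∈ ℱ' (n + 1 - deg x)) ∧ (∀ x, (p:ℤ) ≤ deg x → z x = 0) ∧
            Γt c - c' = D' z) ∧
      (∀ c : B → F, (∀ x, c x ∈ ℱ (n - deg x)) → (∀ x, (p:ℤ) ≤ deg x → c x = 0) → D c = 0 →
        ∀ w : B → F', (∀ x, w x ∈ ℱ' (n + 1 - deg x)) → (∀ x, (p:ℤ) ≤ deg x → w x = 0) →
          Γt c = D' w →
        ∃ v : B → F, (∀ x, v x ∈ ℱ (n + 1 - deg x)) ∧ (∀ x, (p:ℤ) ≤ deg x → v x = 0) ∧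
          c = D v) := by
    intro p
    induction p with
    | zero =>
      intro n
      constructor
      · intro c' hc' hs' _
        have hz' : c' = 0 := funext fun x => hs' x (by simpa using hdeg x)
        refine ⟨0, fun x => zero_mem _, fun x _ => rfl, by simp, 0, fun x => zero_mem _,
          fun x _ => rfl, by rw [hz']; simp⟩
      · intro c hc hs hdc w hw hws hgw
        have hz : c = 0 := funext fun x => hs x (by simpa using hdeg x)
        exact ⟨0, fun x => zero_mem _, fun x _ => rfl, by rw [hz]; simp⟩
    | succ p ih =>
      intro n
      have hcast : ∀ x : B, ((p + 1 : ℕ) : ℤ) ≤ deg x ↔ (p : ℤ) + 1 ≤ deg x := by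
        intro x; push_cast; omega
      constructor
      · -- surjectivity
        intro c' hc' hs' hdc'
        have hs'1 : ∀ x, (p : ℤ) < deg x → c' x = 0 := fun x hx => hs' x (by push_cast; omega)
        have htopcyc : ∀ y : B, deg y = (p:ℤ) → dF' (c' y) = 0 := by
          intro y hy
          have h := hD'top n (p:ℤ) c' hc' hs'1 y hy.ge
          rw [hdc'] at h
          exact h.symm
        have hchoose : ∀ y : B, deg y = (p:ℤ) → ∃ u ∈ ℱ (n - deg y), dF u = 0 ∧
            ∃ z ∈ ℱ' (n - deg y + 1), Γ u - c' y = dF' z :=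
          fun y hy => (hqis (n - deg y)).1 (c' y) (hc' y) (htopcyc y hy)
        choose u hu hdu z hz hgz using hchoose
        set utop : B → F := fun y => if h : deg y = (p:ℤ) then u y h else 0 with hutop
        set ztop : B → F' := fun y => if h : deg y = (p:ℤ) then z y h else 0 with hztop
        have hutopmem : ∀ x, utop x ∈ ℱ (n - deg x) := by
          intro x
          simp only [hutop]
          by_cases h : deg x = (p:ℤ)
          · rw [dif_pos h]; exact hu x h
          · rw [dif_neg h]; exact zero_mem _
        have hutopsupp1 : ∀ x, (p:ℤ) < deg x → utop x = 0 := by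
          intro x hx; simp only [hutop]; rw [dif_neg (by omega)]
        have hztopmem : ∀ x, ztop x ∈ ℱ' (n + 1 - deg x) := by
          intro x
          simp only [hztop]
          by_cases h : deg x = (p:ℤ)
          · rw [dif_pos h]; exact hcastF' _ _ _ (by ring) (hz x h)
          · rw [dif_neg h]; exact zero_mem _
        have hztopsupp1 : ∀ x, (p:ℤ) < deg x → ztop x = 0 := by
          intro x hx; simp only [hztop]; rw [dif_neg (by omega)]
        have hDutopsupp : ∀ y, (p:ℤ) ≤ deg y → D utop y = 0 := by
          intro y hy
          rw [hDtop n (p:ℤ) utop hutopmem hutopsupp1 y hy]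
          rcases eq_or_lt_of_le hy with h | h
          · simp only [hutop]; rw [dif_pos h.symm]; exact hdu y h.symm
          · rw [hutopsupp1 y h, map_zero]
        set c'' : B → F' := c' - Γt utop + D' ztop with hc''
        have hc''mem : ∀ y, c'' y ∈ ℱ' (n - deg y) := by
          intro y
          rw [hc'']
          simp only [Pi.add_apply, Pi.sub_apply]
          exact add_mem (sub_mem (hc' y) (hΓtmem n utop hutopmem y)) (hD'mem n ztop hztopmem y)
        have hc''supp : ∀ y, (p:ℤ) ≤ deg y → c'' y = 0 := by
          intro y hy
          rw [hc'']
          simp only [Pi.add_apply, Pi.sub_apply]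
          rcases eq_or_lt_of_le hy with h | h
          · rw [hD'top (n+1) (p:ℤ) ztop hztopmem hztopsupp1 y hy, hΓt]
            simp only [hutop, hztop]
            rw [dif_pos h.symm, dif_pos h.symm]
            have := hgz y h.symm
            rw [sub_eq_iff_eq_add] at this
            rw [this]
            abel
          · rw [hs' y (by push_cast; omega), hΓt, hutopsupp1 y h, map_zero,
              hD'supp (n+1) (deg y) ztop hztopmem (fun x hx => hztopsupp1 x (lt_of_lt_of_le h hx))
                y le_rfl]
            simp
        have hD'c'' : D' c'' = -Γt (D utop) := by
          rw [hc'', map_add, map_sub, hdc', hDD' ztop, hpart1' utop]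
          abel
        obtain ⟨v, hvmem0, hvsupp, hveq⟩ := (ih (n-1)).2 (D utop)
          (fun x => hcastF _ _ _ (by ring) (hDmem (n-1) utop
            (fun x => hcastF _ _ _ (by ring) (hutopmem x)) x))
          (fun x hx => hDutopsupp x hx) (hDD utop) (-c'')
          (fun x => hcastF' _ _ _ (by ring) (neg_mem (hc''mem x)))
          (fun x hx => by rw [Pi.neg_apply, hc''supp x hx, neg_zero])
          (by rw [map_neg, hD'c'', neg_neg])
        have hvmem : ∀ x, v x ∈ ℱ (n - deg x) :=
          fun x => hcastF _ _ _ (by ring) (hvmem0 x)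
        set e : B → F' := c'' + Γt v with he
        have hemem : ∀ y, e y ∈ ℱ' (n - deg y) := by
          intro y
          rw [he, Pi.add_apply]
          exact add_mem (hc''mem y) (hΓtmem n v hvmem y)
        have hesupp : ∀ y, (p:ℤ) ≤ deg y → e y = 0 := by
          intro y hy
          rw [he, Pi.add_apply, hc''supp y hy, hΓt, hvsupp y hy, map_zero, add_zero]
        have hD'e : D' e = 0 := by
          rw [he, map_add, hD'c'', hpart1' v, ← hveq]
          abel
        obtain ⟨a, hamem, hasupp, hda, z₁, hz₁mem, hz₁supp, hgz₁⟩ :=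
          (ih n).1 e hemem hesupp hD'e
        refine ⟨utop - v + a, ?_, ?_, ?_, z₁ + ztop, ?_, ?_, ?_⟩
        · intro x
          simp only [Pi.add_apply, Pi.sub_apply]
          exact add_mem (sub_mem (hutopmem x) (hvmem x)) (hamem x)
        · intro x hx
          rw [hcast x] at hx
          simp only [Pi.add_apply, Pi.sub_apply]
          rw [hutopsupp1 x (by omega), hvsupp x (by omega), hasupp x (by omega)]
          simp
        · rw [map_add, map_sub, ← hveq, hda]
          abel
        · intro x
          rw [Pi.add_apply]
          exact add_mem (hz₁mem x) (hztopmem x)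
        · intro x hx
          rw [hcast x] at hx
          rw [Pi.add_apply, hz₁supp x (by omega), hztopsupp1 x (by omega)]
          simp
        · rw [map_add, map_add, map_sub, ← hgz₁, he, hc'']
          abel
      · -- injectivity
        intro c hc hs hdc w hw hws hgw
        have hs1 : ∀ x, (p : ℤ) < deg x → c x = 0 := fun x hx => hs x (by push_cast; omega)
        have hws1 : ∀ x, (p : ℤ) < deg x → w x = 0 := fun x hx => hws x (by push_cast; omega)
        have htopcyc : ∀ y : B, deg y = (p:ℤ) → dF (c y) = 0 := by
          intro y hy
          have h := hDtop n (p:ℤ) c hc hs1 y hy.ge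
          rw [hdc] at h
          exact h.symm
        have htopimg : ∀ y : B, deg y = (p:ℤ) → Γ (c y) = dF' (w y) := by
          intro y hy
          have h := hD'top (n+1) (p:ℤ) w hw hws1 y hy.ge
          rw [← hgw, hΓt] at h
          exact h
        have hvchoose : ∀ y : B, deg y = (p:ℤ) →
            ∃ v ∈ ℱ (n - deg y + 1), c y = dF v := by
          intro y hy
          exact (hqis (n - deg y)).2 (c y) (hc y) (htopcyc y hy)
            ⟨w y, hcastF' _ _ _ (by ring) (hw y), htopimg y hy⟩
        choose vt hvt hdvt using hvchoose
        set vtop : B → F := fun y => if h : deg y = (p:ℤ) then vt y h else 0 with hvtop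
        have hvtopmem : ∀ x, vtop x ∈ ℱ (n + 1 - deg x) := by
          intro x
          simp only [hvtop]
          by_cases h : deg x = (p:ℤ)
          · rw [dif_pos h]; exact hcastF _ _ _ (by ring) (hvt x h)
          · rw [dif_neg h]; exact zero_mem _
        have hvtopsupp1 : ∀ x, (p:ℤ) < deg x → vtop x = 0 := by
          intro x hx; simp only [hvtop]; rw [dif_neg (by omega)]
        set c₁ : B → F := c - D vtop with hc₁
        have hc₁mem : ∀ y, c₁ y ∈ ℱ (n - deg y) := by
          intro y
          rw [hc₁, Pi.sub_apply]
          exact sub_mem (hc y) (hDmem n vtop hvtopmem y)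
        have hc₁supp : ∀ y, (p:ℤ) ≤ deg y → c₁ y = 0 := by
          intro y hy
          rw [hc₁, Pi.sub_apply]
          rcases eq_or_lt_of_le hy with h | h
          · rw [hDtop (n+1) (p:ℤ) vtop hvtopmem hvtopsupp1 y hy]
            simp only [hvtop]
            rw [dif_pos h.symm, ← hdvt y h.symm, sub_self]
          · rw [hs1 y h,
              hDsupp (n+1) (deg y) vtop hvtopmem
                (fun x hx => hvtopsupp1 x (lt_of_lt_of_le h hx)) y le_rfl, sub_zero]
        have hDc₁ : D c₁ = 0 := by
          rw [hc₁, map_sub, hdc, hDD vtop, sub_zero]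
        set w' : B → F' := w - Γt vtop with hw'
        have hw'mem : ∀ y, w' y ∈ ℱ' (n + 1 - deg y) := by
          intro y
          rw [hw', Pi.sub_apply]
          exact sub_mem (hw y) (hΓtmem (n+1) vtop hvtopmem y)
        have hw'supp1 : ∀ x, (p:ℤ) < deg x → w' x = 0 := by
          intro x hx
          rw [hw', Pi.sub_apply, hws1 x hx, hΓt, hvtopsupp1 x hx, map_zero, sub_zero]
        have hΓtc₁ : Γt c₁ = D' w' := by
          rw [hc₁, hw', map_sub, map_sub, hgw, hpart1' vtop]
        have hw'topcyc : ∀ y : B, deg y = (p:ℤ) → dF' (w' y) = 0 := by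
          intro y hy
          have h := hD'top (n+1) (p:ℤ) w'
            (fun x => hcastF' _ _ _ (by ring) (hw'mem x)) hw'supp1 y hy.ge
          rw [← hΓtc₁, hΓt, hc₁supp y hy.ge, map_zero] at h
          exact h.symm
        have hgchoose : ∀ y : B, deg y = (p:ℤ) → ∃ g ∈ ℱ (n + 1 - deg y), dF g = 0 ∧
            ∃ hh ∈ ℱ' (n + 1 - deg y + 1), Γ g - w' y = dF' hh :=
          fun y hy => (hqis (n + 1 - deg y)).1 (w' y) (hw'mem y) (hw'topcyc y hy)
        choose g hg hdg hel hhel hghel using hgchoose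
        set gtop : B → F := fun y => if h : deg y = (p:ℤ) then g y h else 0 with hgtop
        set htop : B → F' := fun y => if h : deg y = (p:ℤ) then hel y h else 0 with hhtop
        have hgtopmem : ∀ x, gtop x ∈ ℱ (n + 1 - deg x) := by
          intro x
          simp only [hgtop]
          by_cases h : deg x = (p:ℤ)
          · rw [dif_pos h]; exact hg x h
          · rw [dif_neg h]; exact zero_mem _
        have hgtopsupp1 : ∀ x, (p:ℤ) < deg x → gtop x = 0 := by
          intro x hx; simp only [hgtop]; rw [dif_neg (by omega)]
        have hhtopmem : ∀ x, htop x ∈ ℱ' (n + 2 - deg x) := by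
          intro x
          simp only [hhtop]
          by_cases h : deg x = (p:ℤ)
          · rw [dif_pos h]; exact hcastF' _ _ _ (by ring) (hhel x h)
          · rw [dif_neg h]; exact zero_mem _
        have hhtopsupp1 : ∀ x, (p:ℤ) < deg x → htop x = 0 := by
          intro x hx; simp only [hhtop]; rw [dif_neg (by omega)]
        have hDgtopsupp : ∀ y, (p:ℤ) ≤ deg y → D gtop y = 0 := by
          intro y hy
          rw [hDtop (n+1) (p:ℤ) gtop hgtopmem hgtopsupp1 y hy]
          rcases eq_or_lt_of_le hy with h | h
          · simp only [hgtop]; rw [dif_pos h.symm]; exact hdg y h.symm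
          · rw [hgtopsupp1 y h, map_zero]
        have hDgtopmem : ∀ y, D gtop y ∈ ℱ (n - deg y) := hDmem n gtop hgtopmem
        set c₂ : B → F := c₁ - D gtop with hc₂
        have hc₂mem : ∀ y, c₂ y ∈ ℱ (n - deg y) := by
          intro y
          rw [hc₂, Pi.sub_apply]
          exact sub_mem (hc₁mem y) (hDgtopmem y)
        have hc₂supp : ∀ y, (p:ℤ) ≤ deg y → c₂ y = 0 := by
          intro y hy
          rw [hc₂, Pi.sub_apply, hc₁supp y hy, hDgtopsupp y hy, sub_zero]
        have hDc₂ : D c₂ = 0 := by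
          rw [hc₂, map_sub, hDc₁, hDD gtop, sub_zero]
        set w'' : B → F' := w' - Γt gtop + D' htop with hw''
        have hw''mem : ∀ y, w'' y ∈ ℱ' (n + 1 - deg y) := by
          intro y
          rw [hw'']
          simp only [Pi.add_apply, Pi.sub_apply]
          exact add_mem (sub_mem (hw'mem y) (hΓtmem (n+1) gtop hgtopmem y))
            (hD'mem (n+1) htop (fun x => hcastF' _ _ _ (by ring) (hhtopmem x)) y)
        have hw''supp : ∀ y, (p:ℤ) ≤ deg y → w'' y = 0 := by
          intro y hy
          rw [hw'']
          simp only [Pi.add_apply, Pi.sub_apply]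
          rcases eq_or_lt_of_le hy with h | h
          · rw [hD'top (n+2) (p:ℤ) htop hhtopmem hhtopsupp1 y hy, hΓt]
            simp only [hgtop, hhtop]
            rw [dif_pos h.symm, dif_pos h.symm]
            have := hghel y h.symm
            rw [sub_eq_iff_eq_add] at this
            rw [this]
            abel
          · rw [hw'supp1 y h, hΓt, hgtopsupp1 y h, map_zero,
              hD'supp (n+2) (deg y) htop hhtopmem
                (fun x hx => hhtopsupp1 x (lt_of_lt_of_le h hx)) y le_rfl]
            simp
        have hΓtc₂ : Γt c₂ = D' w'' := by
          rw [hc₂, map_sub, hΓtc₁, hw'', map_add, map_sub, hDD' htop, add_zero, map_sub, hpart1' gtop, hw', map_sub]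
        obtain ⟨v₂, hv₂mem, hv₂supp, hv₂eq⟩ :=
          (ih n).2 c₂ hc₂mem hc₂supp hDc₂ w'' hw''mem hw''supp hΓtc₂
        refine ⟨v₂ + gtop + vtop, ?_, ?_, ?_⟩
        · intro x
          simp only [Pi.add_apply]
          exact add_mem (add_mem (hv₂mem x) (hgtopmem x)) (hvtopmem x)
        · intro x hx
          rw [hcast x] at hx
          simp only [Pi.add_apply]
          rw [hv₂supp x (by omega), hgtopsupp1 x (by omega), hvtopsupp1 x (by omega)]
          simp
        · rw [map_add, map_add, ← hv₂eq, hc₂, hc₁]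
          abel
  -- conclude, using a level of the filtration above all degrees
  set N : ℕ := (Finset.univ.sup fun x : B => (deg x).toNat) + 1 with hN
  have hNlt : ∀ x : B, deg x < (N : ℤ) := by
    intro x
    have h1 : (deg x).toNat ≤ Finset.univ.sup (fun x : B => (deg x).toNat) :=
      Finset.le_sup (f := fun x : B => (deg x).toNat) (Finset.mem_univ x)
    have h2 := Int.toNat_of_nonneg (hdeg x)
    rw [hN]
    push_cast
    omega
  intro n
  constructor
  · intro c' hc' hdc'
    obtain ⟨c, hcmem, -, hdc, z, hzmem, -, hgz⟩ :=
      (key N n).1 c' hc' (fun x hx => absurd (hNlt x) (not_lt.2 hx)) hdc'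
    exact ⟨c, hcmem, hdc, z, hzmem, hgz⟩
  · rintro c hcmem hdc ⟨w, hwmem, hgw⟩
    obtain ⟨v, hvmem, -, hveq⟩ :=
      (key N n).2 c hcmem (fun x hx => absurd (hNlt x) (not_lt.2 hx)) hdc
        w hwmem (fun x hx => absurd (hNlt x) (not_lt.2 hx)) hgw
    exact ⟨v, hvmem, hveq⟩
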